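/- arXiv:1902.02145 — 8 statements merged into one kernel-verified Lean document; each statement's English description precedes it below -/
import Mathlib

section
/- Let u₁,u₂,u₃,v₁,v₂,v₃ be nonzero real numbers and let x : ℝ³ × ℝ³ → ℝ⁶ be the map x(u,v) = (u₁v₂, u₃v₂, u₃v₁, u₂v₁, u₂v₃, u₁v₃). Then the 6×6 Jacobian matrix of x at (u,v), i.e. the matrix of partial derivatives of the six components with respect to u₁,u₂,u₃,v₁,v₂,v₃, has rank exactly 5. -/
/-- The map x : ℝ³ × ℝ³ → ℝ⁶, with the six variables u₁,u₂,u₃,v₁,v₂,v₃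
packed as `p 0, ..., p 5`:
x(u,v) = (u₁v₂, u₃v₂, u₃v₁, u₂v₁, u₂v₃, u₁v₃). -/
noncomputable def xMap (p : Fin 6 → ℝ) : Fin 6 → ℝ :=
  ![p 0 * p 4, p 2 * p 4, p 2 * p 3, p 1 * p 3, p 1 * p 5, p 0 * p 5]

/-- The 6×6 Jacobian matrix of `xMap` at `p`: the (m,k)-entry is the partial
derivative of the m-th component with respect to the k-th variable. -/
noncomputable def xJacobian (p : Fin 6 → ℝ) : Matrix (Fin 6) (Fin 6) ℝ :=
  Matrix.of fun m k => fderiv ℝ (fun q => xMap q m) p (Pi.single k 1)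

@[simp] lemma my_cons_val_five {α : Type*} (x : α) (u : Fin 5 → α) :
    Matrix.vecCons x u 5 = u 4 := rfl

lemma fderiv_mul_single (i j k : Fin 6) (p : Fin 6 → ℝ) :
    fderiv ℝ (fun q : Fin 6 → ℝ => q i * q j) p (Pi.single k 1) =
      p i * (Pi.single k 1 : Fin 6 → ℝ) j + p j * (Pi.single k 1 : Fin 6 → ℝ) i := by
  have hi : HasFDerivAt (fun q : Fin 6 → ℝ => q i)
      (ContinuousLinearMap.proj i : (Fin 6 → ℝ) →L[ℝ] ℝ) p := hasFDerivAt_apply i p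
  have hj : HasFDerivAt (fun q : Fin 6 → ℝ => q j)
      (ContinuousLinearMap.proj j : (Fin 6 → ℝ) →L[ℝ] ℝ) p := hasFDerivAt_apply j p
  rw [HasFDerivAt.fderiv (f := fun q : Fin 6 → ℝ => q i * q j) (hi.mul hj)]
  simp [mul_comm]

lemma xJacobian_entry (p : Fin 6 → ℝ) (m k i j : Fin 6)
    (h : ∀ q : Fin 6 → ℝ, xMap q m = q i * q j) :
    xJacobian p m k =
      p i * (Pi.single k 1 : Fin 6 → ℝ) j + p j * (Pi.single k 1 : Fin 6 → ℝ) i := by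
  unfold xJacobian
  rw [Matrix.of_apply, show (fun q : Fin 6 → ℝ => xMap q m) = fun q : Fin 6 → ℝ => q i * q j
    from funext h]
  exact fderiv_mul_single i j k p

lemma xJacobian_eq (p : Fin 6 → ℝ) :
    xJacobian p = !![p 4, 0, 0, 0, p 0, 0;
                     0, 0, p 4, 0, p 2, 0;
                     0, 0, p 3, p 2, 0, 0;
                     0, p 3, 0, p 1, 0, 0;
                     0, p 5, 0, 0, 0, p 1;
                     p 5, 0, 0, 0, 0, p 0] := by
  ext m k
  fin_cases m
  · show xJacobian p 0 k = ![p 4, 0, 0, 0, p 0, 0] k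
    rw [xJacobian_entry p 0 k 0 4 (fun q => rfl)]
    fin_cases k <;> simp [Pi.single_apply]
  · show xJacobian p 1 k = ![0, 0, p 4, 0, p 2, 0] k
    rw [xJacobian_entry p 1 k 2 4 (fun q => rfl)]
    fin_cases k <;> simp [Pi.single_apply]
  · show xJacobian p 2 k = ![0, 0, p 3, p 2, 0, 0] k
    rw [xJacobian_entry p 2 k 2 3 (fun q => rfl)]
    fin_cases k <;> simp [Pi.single_apply]
  · show xJacobian p 3 k = ![0, p 3, 0, p 1, 0, 0] k
    rw [xJacobian_entry p 3 k 1 3 (fun q => rfl)]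
    fin_cases k <;> simp [Pi.single_apply]
  · show xJacobian p 4 k = ![0, p 5, 0, 0, 0, p 1] k
    rw [xJacobian_entry p 4 k 1 5 (fun q => rfl)]
    fin_cases k <;> simp [Pi.single_apply]
  · show xJacobian p 5 k = ![p 5, 0, 0, 0, 0, p 0] k
    rw [xJacobian_entry p 5 k 0 5 (fun q => rfl)]
    fin_cases k <;> simp [Pi.single_apply]

theorem jacobian_rank_eq_five (p : Fin 6 → ℝ) (hp : ∀ i, p i ≠ 0) :
    (xJacobian p).rank = 5 := by
  rw [xJacobian_eq p]
  set M : Matrix (Fin 6) (Fin 6) ℝ :=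
    !![p 4, 0, 0, 0, p 0, 0;
       0, 0, p 4, 0, p 2, 0;
       0, 0, p 3, p 2, 0, 0;
       0, p 3, 0, p 1, 0, 0;
       0, p 5, 0, 0, 0, p 1;
       p 5, 0, 0, 0, 0, p 0] with hMdef
  set w : Fin 6 → ℝ := ![p 0, p 1, p 2, -p 3, -p 4, -p 5] with hwdef
  have hw0 : w ≠ 0 := by
    intro h
    exact hp 0 (by simpa [hwdef] using congrFun h 0)
  have hmv : ∀ x : Fin 6 → ℝ, M.mulVec x =
      ![p 4 * x 0 + p 0 * x 4, p 4 * x 2 + p 2 * x 4, p 3 * x 2 + p 2 * x 3,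
        p 3 * x 1 + p 1 * x 3, p 5 * x 1 + p 1 * x 5, p 5 * x 0 + p 0 * x 5] := by
    intro x
    funext i
    fin_cases i <;>
      simp [hMdef, Matrix.mulVec, dotProduct, Fin.sum_univ_six]
  have hker : LinearMap.ker M.mulVecLin = Submodule.span ℝ {w} := by
    apply le_antisymm
    · intro x hx
      rw [LinearMap.mem_ker, Matrix.mulVecLin_apply, hmv x] at hx
      have e0 : p 4 * x 0 + p 0 * x 4 = 0 := congrFun hx 0
      have e1 : p 4 * x 2 + p 2 * x 4 = 0 := congrFun hx 1
      have e2 : p 3 * x 2 + p 2 * x 3 = 0 := congrFun hx 2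
      have e3 : p 3 * x 1 + p 1 * x 3 = 0 := congrFun hx 3
      have e5 : p 5 * x 0 + p 0 * x 5 = 0 := congrFun hx 5
      have h4 : p 0 * x 4 = -(p 4 * x 0) := by linarith
      have h5 : p 0 * x 5 = -(p 5 * x 0) := by linarith
      have h2 : p 0 * x 2 = p 2 * x 0 :=
        mul_left_cancel₀ (hp 4) (by linear_combination p 0 * e1 - p 2 * h4)
      have h3 : p 0 * x 3 = -(p 3 * x 0) :=
        mul_left_cancel₀ (hp 2) (by linear_combination p 0 * e2 - p 3 * h2)
      have h1 : p 0 * x 1 = p 1 * x 0 :=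
        mul_left_cancel₀ (hp 3) (by linear_combination p 0 * e3 - p 1 * h3)
      refine Submodule.mem_span_singleton.mpr ⟨x 0 / p 0, ?_⟩
      funext i
      fin_cases i
      · show x 0 / p 0 * p 0 = x 0
        exact div_mul_cancel₀ (x 0) (hp 0)
      · show x 0 / p 0 * p 1 = x 1
        rw [div_mul_eq_mul_div, div_eq_iff (hp 0)]
        linear_combination -h1
      · show x 0 / p 0 * p 2 = x 2
        rw [div_mul_eq_mul_div, div_eq_iff (hp 0)]
        linear_combination -h2
      · show x 0 / p 0 * -p 3 = x 3
        rw [div_mul_eq_mul_div, div_eq_iff (hp 0)]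
        linear_combination -h3
      · show x 0 / p 0 * -p 4 = x 4
        rw [div_mul_eq_mul_div, div_eq_iff (hp 0)]
        linear_combination -h4
      · show x 0 / p 0 * -p 5 = x 5
        rw [div_mul_eq_mul_div, div_eq_iff (hp 0)]
        linear_combination -h5
    · rw [Submodule.span_singleton_le_iff_mem, LinearMap.mem_ker, Matrix.mulVecLin_apply, hmv w]
      funext i
      fin_cases i <;> simp [hwdef] <;> ring
  have hfr := LinearMap.finrank_range_add_finrank_ker M.mulVecLin
  rw [hker, finrank_span_singleton hw0] at hfr
  have hrank : M.rank + 1 = 6 := by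
    rw [Matrix.rank]
    simpa using hfr
  omega
end

section
/- Let u₁,u₂,u₃,v₁,v₂,v₃ be nonzero real numbers and let J be the 6×6 Jacobian matrix of the map x(u,v) = (u₁v₂, u₃v₂, u₃v₁, u₂v₁, u₂v₃, u₁v₃) with respect to u₁,u₂,u₃,v₁,v₂,v₃. Then for every choice of five of the six rows of J, the chosen five rows are linearly independent; equivalently, every 5×6 submatrix of J obtained by deleting one row has rank 5. -/
lemma fderiv_mul_apply' (i j k : Fin 6) (p : Fin 6 → ℝ) :
    fderiv ℝ (fun q : Fin 6 → ℝ => q i * q j) p (Pi.single k 1) =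
    (Pi.single k 1 : Fin 6 → ℝ) i * p j + p i * (Pi.single k 1 : Fin 6 → ℝ) j := by
  have hi := (ContinuousLinearMap.proj i : (Fin 6 → ℝ) →L[ℝ] ℝ).hasFDerivAt (x := p)
  have hj := (ContinuousLinearMap.proj j : (Fin 6 → ℝ) →L[ℝ] ℝ).hasFDerivAt (x := p)
  have h : HasFDerivAt (fun q : Fin 6 → ℝ => q i * q j)
      (p i • (ContinuousLinearMap.proj j : (Fin 6 → ℝ) →L[ℝ] ℝ)
        + p j • (ContinuousLinearMap.proj i : (Fin 6 → ℝ) →L[ℝ] ℝ)) p := hi.mul hj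
  rw [h.fderiv]
  simp
  ring

lemma rows_li_of_isUnit (M : Matrix (Fin 6) (Fin 6) ℝ) (e c : Fin 5 → Fin 6)
    (h : IsUnit (M.submatrix e c)) : LinearIndependent ℝ (fun i => M (e i)) := by
  have h2 := Matrix.linearIndependent_rows_iff_isUnit.2 h
  exact LinearIndependent.of_comp (LinearMap.funLeft ℝ ℝ c) h2

lemma rows_li_of_det (M : Matrix (Fin 6) (Fin 6) ℝ) (e c : Fin 5 → Fin 6)
    (h : (M.submatrix e c).det ≠ 0) : LinearIndependent ℝ (fun i => M (e i)) :=
  rows_li_of_isUnit M e c ((Matrix.isUnit_iff_isUnit_det _).2 (isUnit_iff_ne_zero.2 h))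

set_option maxRecDepth 8000 in
set_option maxHeartbeats 2000000 in
/-- Any five of the six rows of the Jacobian are linearly independent;
equivalently, every 5×6 submatrix obtained by deleting one row has rank 5. -/
theorem jacobian_any_five_rows_linearIndependent (p : Fin 6 → ℝ)
    (hp : ∀ i, p i ≠ 0) (r : Fin 6) :
    LinearIndependent ℝ (fun m : {m : Fin 6 // m ≠ r} => xJacobian p m.1) ∧
    ((xJacobian p).submatrix (Subtype.val : {m : Fin 6 // m ≠ r} → Fin 6) id).rank = 5 := by
  have li : LinearIndependent ℝ (fun m : {m : Fin 6 // m ≠ r} => xJacobian p m.1) := by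
    rw [← linearIndependent_equiv (finSuccAboveEquiv r)]
    show LinearIndependent ℝ (fun i : Fin 5 => xJacobian p (r.succAbove i))
    fin_cases r
    · apply rows_li_of_det _ _ (![1,2,3,4,5] : Fin 5 → Fin 6)
      show ((xJacobian p).submatrix (Fin.succAbove (0:Fin 6)) (![1,2,3,4,5] : Fin 5 → Fin 6)).det ≠ 0
      have hsub : (xJacobian p).submatrix (Fin.succAbove 0) ![1,2,3,4,5] =
          !![0, p 4, 0, p 2, 0;
             0, p 3, p 2, 0, 0;
             p 3, 0, p 1, 0, 0;
             p 5, 0, 0, 0, p 1;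
             0, 0, 0, 0, p 0] := by
        rw [xJacobian_eq]; ext i j; fin_cases i <;> fin_cases j <;> rfl
      rw [hsub]
      simp (config := {decide := true}) [Matrix.det_succ_row_zero, Fin.sum_univ_succ,
        Fin.succAbove_of_castSucc_lt, Fin.succAbove_of_le_castSucc, hp]
    · apply rows_li_of_det _ _ (![0,1,3,4,5] : Fin 5 → Fin 6)
      show ((xJacobian p).submatrix (Fin.succAbove (1:Fin 6)) (![0,1,3,4,5] : Fin 5 → Fin 6)).det ≠ 0
      have hsub : (xJacobian p).submatrix (Fin.succAbove 1) ![0,1,3,4,5] =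
          !![p 4, 0, 0, p 0, 0;
             0, 0, p 2, 0, 0;
             0, p 3, p 1, 0, 0;
             0, p 5, 0, 0, p 1;
             p 5, 0, 0, 0, p 0] := by
        rw [xJacobian_eq]; ext i j; fin_cases i <;> fin_cases j <;> rfl
      rw [hsub]
      simp (config := {decide := true}) [Matrix.det_succ_row_zero, Fin.sum_univ_succ,
        Fin.succAbove_of_castSucc_lt, Fin.succAbove_of_le_castSucc, hp]
    · apply rows_li_of_det _ _ (![0,1,3,4,5] : Fin 5 → Fin 6)
      show ((xJacobian p).submatrix (Fin.succAbove (2:Fin 6)) (![0,1,3,4,5] : Fin 5 → Fin 6)).det ≠ 0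
      have hsub : (xJacobian p).submatrix (Fin.succAbove 2) ![0,1,3,4,5] =
          !![p 4, 0, 0, p 0, 0;
             0, 0, 0, p 2, 0;
             0, p 3, p 1, 0, 0;
             0, p 5, 0, 0, p 1;
             p 5, 0, 0, 0, p 0] := by
        rw [xJacobian_eq]; ext i j; fin_cases i <;> fin_cases j <;> rfl
      rw [hsub]
      simp (config := {decide := true}) [Matrix.det_succ_row_zero, Fin.sum_univ_succ,
        Fin.succAbove_of_castSucc_lt, Fin.succAbove_of_le_castSucc, hp]
    · apply rows_li_of_det _ _ (![0,2,3,4,5] : Fin 5 → Fin 6)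
      show ((xJacobian p).submatrix (Fin.succAbove (3:Fin 6)) (![0,2,3,4,5] : Fin 5 → Fin 6)).det ≠ 0
      have hsub : (xJacobian p).submatrix (Fin.succAbove 3) ![0,2,3,4,5] =
          !![p 4, 0, 0, p 0, 0;
             0, p 4, 0, p 2, 0;
             0, p 3, p 2, 0, 0;
             0, 0, 0, 0, p 1;
             p 5, 0, 0, 0, p 0] := by
        rw [xJacobian_eq]; ext i j; fin_cases i <;> fin_cases j <;> rfl
      rw [hsub]
      simp (config := {decide := true}) [Matrix.det_succ_row_zero, Fin.sum_univ_succ,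
        Fin.succAbove_of_castSucc_lt, Fin.succAbove_of_le_castSucc, hp]
    · apply rows_li_of_det _ _ (![0,1,2,3,4] : Fin 5 → Fin 6)
      show ((xJacobian p).submatrix (Fin.succAbove (4:Fin 6)) (![0,1,2,3,4] : Fin 5 → Fin 6)).det ≠ 0
      have hsub : (xJacobian p).submatrix (Fin.succAbove 4) ![0,1,2,3,4] =
          !![p 4, 0, 0, 0, p 0;
             0, 0, p 4, 0, p 2;
             0, 0, p 3, p 2, 0;
             0, p 3, 0, p 1, 0;
             p 5, 0, 0, 0, 0] := by
        rw [xJacobian_eq]; ext i j; fin_cases i <;> fin_cases j <;> rfl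
      rw [hsub]
      simp (config := {decide := true}) [Matrix.det_succ_row_zero, Fin.sum_univ_succ,
        Fin.succAbove_of_castSucc_lt, Fin.succAbove_of_le_castSucc, hp]
    · apply rows_li_of_det _ _ (![0,1,2,3,4] : Fin 5 → Fin 6)
      show ((xJacobian p).submatrix (Fin.succAbove (5:Fin 6)) (![0,1,2,3,4] : Fin 5 → Fin 6)).det ≠ 0
      have hsub : (xJacobian p).submatrix (Fin.succAbove 5) ![0,1,2,3,4] =
          !![p 4, 0, 0, 0, p 0;
             0, 0, p 4, 0, p 2;
             0, 0, p 3, p 2, 0;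
             0, p 3, 0, p 1, 0;
             0, p 5, 0, 0, 0] := by
        rw [xJacobian_eq]; ext i j; fin_cases i <;> fin_cases j <;> rfl
      rw [hsub]
      simp (config := {decide := true}) [Matrix.det_succ_row_zero, Fin.sum_univ_succ,
        Fin.succAbove_of_castSucc_lt, Fin.succAbove_of_le_castSucc, hp]
  refine ⟨li, ?_⟩
  have hli : LinearIndependent ℝ
      ((xJacobian p).submatrix (Subtype.val : {m : Fin 6 // m ≠ r} → Fin 6) id) := li
  erw [hli.rank_matrix, Fintype.card_congr (finSuccAboveEquiv r).symm, Fintype.card_fin]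
end

section
/- Let n ≥ 3 and let F : ℝⁿ × ℝⁿ → ℝ^{n(n−1)} be the map whose components, indexed by ordered pairs (i,j) with i ≠ j, are F(u,v)_{(i,j)} = uᵢvⱼ. Then at every point (u,v) with all coordinates uᵢ and vⱼ nonzero, the Jacobian matrix of F (with respect to the 2n variables u₁,…,uₙ,v₁,…,vₙ) has rank exactly 2n − 1. -/
open Matrix


/-- For `n ≥ 3`, the map `F` sends `(u, v)` (packed as a single function
`q : Fin n ⊕ Fin n → ℝ`, with `u i = q (Sum.inl i)` and `v j = q (Sum.inr j)`)
to the family of all products `uᵢ vⱼ` with `i ≠ j`.  Its Jacobian at `q` is the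
`n(n-1) × 2n` matrix of partial derivatives with respect to the `2n` variables;
at every point with all coordinates nonzero it has rank exactly `2n - 1`. -/
theorem jacobian_rank_eq_two_n_sub_one (n : ℕ) (hn : 3 ≤ n)
    (q : (Fin n ⊕ Fin n) → ℝ) (hq : ∀ k, q k ≠ 0) :
    (Matrix.of fun (p : {p : Fin n × Fin n // p.1 ≠ p.2}) (k : Fin n ⊕ Fin n) =>
        fderiv ℝ (fun r : (Fin n ⊕ Fin n) → ℝ =>
          r (Sum.inl p.1.1) * r (Sum.inr p.1.2)) q (Pi.single k 1)).rank
      = 2 * n - 1 := by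
  classical
  set M : Matrix {p : Fin n × Fin n // p.1 ≠ p.2} (Fin n ⊕ Fin n) ℝ :=
    Matrix.of fun (p : {p : Fin n × Fin n // p.1 ≠ p.2}) (k : Fin n ⊕ Fin n) =>
        fderiv ℝ (fun r : (Fin n ⊕ Fin n) → ℝ =>
          r (Sum.inl p.1.1) * r (Sum.inr p.1.2)) q (Pi.single k 1) with hM
  have hent : ∀ (i j : Fin n) (k : Fin n ⊕ Fin n),
      fderiv ℝ (fun r : (Fin n ⊕ Fin n) → ℝ => r (Sum.inl i) * r (Sum.inr j)) q (Pi.single k 1)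
      = q (Sum.inl i) * (Pi.single k 1 : (Fin n ⊕ Fin n) → ℝ) (Sum.inr j) + q (Sum.inr j) * (Pi.single k 1 : (Fin n ⊕ Fin n) → ℝ) (Sum.inl i) := by
    intro i j k
    have h1 := hasFDerivAt_apply (𝕜 := ℝ) (Sum.inl i) q
    have h2 := hasFDerivAt_apply (𝕜 := ℝ) (Sum.inr j) q
    rw [HasFDerivAt.fderiv (f := fun r : (Fin n ⊕ Fin n) → ℝ => r (Sum.inl i) * r (Sum.inr j)) (h1.mul h2)]
    simp [ContinuousLinearMap.proj_apply]
  have hmul : ∀ (c : (Fin n ⊕ Fin n) → ℝ) (p : {p : Fin n × Fin n // p.1 ≠ p.2}),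
      M.mulVecLin c p
      = q (Sum.inl p.1.1) * c (Sum.inr p.1.2) + q (Sum.inr p.1.2) * c (Sum.inl p.1.1) := by
    intro c p
    simp only [Matrix.mulVecLin_apply, Matrix.mulVec, dotProduct, hM, Matrix.of_apply, hent,
      Pi.single_apply, mul_ite, mul_one, mul_zero, add_mul, ite_mul, zero_mul,
      Finset.sum_add_distrib, Finset.sum_ite_eq, Finset.mem_univ, if_true]
  -- kernel element
  set c₀ : (Fin n ⊕ Fin n) → ℝ := Sum.elim (fun i => q (Sum.inl i)) (fun j => -q (Sum.inr j))
    with hc₀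
  have hc₀ne : c₀ ≠ 0 := by
    intro h
    have := congrFun h (Sum.inl ⟨0, by omega⟩)
    simp [hc₀] at this
    exact hq _ this
  have hker : LinearMap.ker M.mulVecLin = Submodule.span ℝ {c₀} := by
    apply le_antisymm
    · intro c hc
      have heq : ∀ (i j : Fin n), i ≠ j →
          q (Sum.inl i) * c (Sum.inr j) + q (Sum.inr j) * c (Sum.inl i) = 0 := by
        intro i j hij
        have := congrFun (LinearMap.mem_ker.mp hc) ⟨(i, j), hij⟩
        rwa [hmul] at this
      set t : ℝ := c (Sum.inl ⟨0, by omega⟩) / q (Sum.inl ⟨0, by omega⟩) with ht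
      -- helper to extract one equation
      have hl : ∀ i : Fin n, c (Sum.inl i) = t * q (Sum.inl i) := by
        intro i
        have ht0 : t * q (Sum.inl ⟨0, by omega⟩) = c (Sum.inl ⟨0, by omega⟩) :=
          div_mul_cancel₀ _ (hq _)
        by_cases hi : i = ⟨0, by omega⟩
        · subst hi
          exact ht0.symm
        · -- pick j ≠ 0, j ≠ i
          obtain ⟨j, hj0, hji⟩ : ∃ j : Fin n, j ≠ ⟨0, by omega⟩ ∧ j ≠ i := by
            by_contra hcon
            push_neg at hcon
            have hsub : (Finset.univ : Finset (Fin n)) ⊆ {⟨0, by omega⟩, i} := by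
              intro j _
              rcases eq_or_ne j (⟨0, by omega⟩ : Fin n) with h | h
              · simp [h]
              · simp [hcon j h]
            have := Finset.card_le_card hsub
            simp [Finset.card_univ] at this
            have h2 : ({⟨0, by omega⟩, i} : Finset (Fin n)).card ≤ 2 :=
              Finset.card_insert_le _ _ |>.trans (by simp)
            omega
          have e1 := heq ⟨0, by omega⟩ j (Ne.symm hj0)
          have e2 := heq i j (Ne.symm hji)
          have hvj := hq (Sum.inr j)
          have hu0 := hq (Sum.inl (⟨0, by omega⟩ : Fin n))
          have hcj : c (Sum.inr j) = -t * q (Sum.inr j) := by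
            refine mul_left_cancel₀ hu0 ?_
            linear_combination e1 + q (Sum.inr j) * ht0
          rw [hcj] at e2
          refine mul_left_cancel₀ hvj ?_
          linear_combination e2
      have hr : ∀ j : Fin n, c (Sum.inr j) = -t * q (Sum.inr j) := by
        intro j
        obtain ⟨i, hij⟩ : ∃ i : Fin n, i ≠ j := by
          rcases eq_or_ne j (⟨0, by omega⟩ : Fin n) with h | h
          · exact ⟨⟨1, by omega⟩, by subst h; simp [Fin.ext_iff]⟩
          · exact ⟨⟨0, by omega⟩, Ne.symm h⟩
        have e := heq i j hij
        rw [hl i] at e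
        have hui := hq (Sum.inl i)
        have hvj := hq (Sum.inr j)
        refine mul_left_cancel₀ hui ?_
        linear_combination e
      have : c = t • c₀ := by
        funext k
        cases k with
        | inl i =>
          simp only [Pi.smul_apply, smul_eq_mul, hc₀, Sum.elim_inl, hl i]
        | inr j =>
          simp only [Pi.smul_apply, smul_eq_mul, hc₀, Sum.elim_inr, hr j]
          ring
      rw [this]
      exact Submodule.smul_mem _ _ (Submodule.mem_span_singleton_self _)
    · rw [Submodule.span_le, Set.singleton_subset_iff]
      refine LinearMap.mem_ker.mpr ?_
      funext p
      rw [hmul]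
      simp [hc₀]
      ring
  have hrn := LinearMap.finrank_range_add_finrank_ker M.mulVecLin
  rw [hker, finrank_span_singleton hc₀ne] at hrn
  have hdom : Module.finrank ℝ ((Fin n ⊕ Fin n) → ℝ) = 2 * n := by
    rw [Module.finrank_pi]
    simp [Fintype.card_sum]
    ring
  rw [hdom] at hrn
  have : M.rank = 2 * n - 1 := by
    rw [Matrix.rank]
    omega
  exact this
end

section
/- Let u₁,u₂,u₃,v₁,v₂,v₃ be nonzero real numbers. Then the characteristic polynomial of H equals (X² − 5)(X² − 1)²; in particular det(H) = −5 and H is invertible. -/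
open Matrix Polynomial

/-- The 6×6 matrix H built from nonzero reals u₁,u₂,u₃,v₁,v₂,v₃. -/
noncomputable def Hmat (u1 u2 u3 v1 v2 v3 : ℝ) : Matrix (Fin 6) (Fin 6) ℝ :=
  !![1, u1/u2, u1/u3, u1/v1, 0, u1/v3;
     0, 2, u2/u3, u2/v1, 0, u2/v3;
     0, u3/u2, 2, u3/v1, 0, u3/v3;
     0, -v1/u2, -v1/u3, -2, 0, -v1/v3;
     0, -v2/u2, -v2/u3, -v2/v1, -1, -v2/v3;
     0, -v3/u2, -v3/u3, -v3/v1, 0, -2]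

lemma charpoly_conj' {n : ℕ} (D A : Matrix (Fin n) (Fin n) ℝ) (h : IsUnit D.det) :
    (D * A * D⁻¹).charpoly = A.charpoly := by
  have hDD : D * D⁻¹ = 1 := mul_nonsing_inv D h
  have hmap : charmatrix (D * A * D⁻¹)
      = D.map C * charmatrix A * (D⁻¹).map C := by
    simp only [charmatrix, RingHom.mapMatrix_apply, Matrix.map_mul, mul_sub, sub_mul]
    congr 1
    have hc : ∀ M : Matrix (Fin n) (Fin n) ℝ[X],
        M * (scalar (Fin n)) X = (scalar (Fin n)) X * M := fun M =>
      (scalar_commute X (Commute.all X) M).symm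
    rw [hc, mul_assoc, ← Matrix.map_mul, hDD]
    simp
  rw [Matrix.charpoly, hmap, Matrix.det_mul, Matrix.det_mul,
    ← RingHom.mapMatrix_apply, ← RingHom.mapMatrix_apply, ← RingHom.map_det, ← RingHom.map_det,
    mul_comm, ← mul_assoc, ← _root_.map_mul, ← Matrix.det_mul, nonsing_inv_mul D h]
  simp [Matrix.charpoly]

lemma cons_val_five' {α : Type*} {m : ℕ} (x : α) (u : Fin (m+5) → α) :
    vecCons x u 5 = vecHead (vecTail (vecTail (vecTail (vecTail u)))) := rfl

set_option maxHeartbeats 1600000 in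
set_option maxRecDepth 20000 in
lemma Amat_charpoly :
    (!![1,1,1,1,0,1; 0,2,1,1,0,1; 0,1,2,1,0,1; 0,-1,-1,-2,0,-1; 0,-1,-1,-1,-1,-1;
        0,-1,-1,-1,0,-2] : Matrix (Fin 6) (Fin 6) ℝ).charpoly
      = (X ^ 2 - C 5) * (X ^ 2 - C 1) ^ 2 := by
  rw [Matrix.charpoly]
  rw [show (charmatrix !![1,1,1,1,0,1; 0,2,1,1,0,1; 0,1,2,1,0,1; 0,-1,-1,-2,0,-1;
        0,-1,-1,-1,-1,-1; 0,-1,-1,-1,0,-2] : Matrix (Fin 6) (Fin 6) ℝ[X]) =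
    !![X-1,-1,-1,-1,0,-1; 0,X-2,-1,-1,0,-1; 0,-1,X-2,-1,0,-1; 0,1,1,X+2,0,1;
       0,1,1,1,X+1,1; 0,1,1,1,0,X+2] from ?_]
  · simp only [Matrix.det_succ_row_zero, Fin.sum_univ_succ, Matrix.submatrix_apply,
      Fin.succAbove, Matrix.cons_val', Matrix.cons_val_zero, Matrix.cons_val_one,
      Matrix.head_cons, Matrix.head_fin_const, Matrix.cons_val_fin_one, Matrix.cons_val_succ,
      Matrix.of_apply, Fin.sum_univ_zero, Matrix.det_fin_zero,
      Fin.val_zero, Fin.val_succ, Fin.castSucc, Fin.castAdd, Fin.castLE, Fin.lt_def, Fin.val_mk]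
    norm_num [map_ofNat, Matrix.cons_val_two, Matrix.vecHead, Matrix.vecTail]
    ring
  · refine Matrix.ext fun i j => ?_
    fin_cases i <;> fin_cases j <;>
      simp [charmatrix_apply, Matrix.one_apply, Matrix.vecHead, Matrix.vecTail, cons_val_five',
        map_ofNat]

set_option maxHeartbeats 800000 in
lemma Hmat_eq (u1 u2 u3 v1 v2 v3 : ℝ) (hu1 : u1 ≠ 0) (hu2 : u2 ≠ 0)
    (hu3 : u3 ≠ 0) (hv1 : v1 ≠ 0) (hv2 : v2 ≠ 0) (hv3 : v3 ≠ 0) :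
    Hmat u1 u2 u3 v1 v2 v3 =
      diagonal ![u1,u2,u3,v1,v2,v3] *
      (!![1,1,1,1,0,1; 0,2,1,1,0,1; 0,1,2,1,0,1; 0,-1,-1,-2,0,-1; 0,-1,-1,-1,-1,-1;
          0,-1,-1,-1,0,-2] : Matrix (Fin 6) (Fin 6) ℝ) *
      (diagonal ![u1,u2,u3,v1,v2,v3])⁻¹ := by
  have hinv : (diagonal ![u1,u2,u3,v1,v2,v3])⁻¹
      = diagonal ![u1⁻¹,u2⁻¹,u3⁻¹,v1⁻¹,v2⁻¹,v3⁻¹] := by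
    apply Matrix.inv_eq_right_inv
    have hfun : ∀ i, (![u1,u2,u3,v1,v2,v3] : Fin 6 → ℝ) i
        * ![u1⁻¹,u2⁻¹,u3⁻¹,v1⁻¹,v2⁻¹,v3⁻¹] i = 1 := by
      intro i
      fin_cases i <;>
        simp [Matrix.vecHead, Matrix.vecTail, cons_val_five', hu1, hu2, hu3, hv1, hv2, hv3]
    rw [Matrix.diagonal_mul_diagonal]
    simp only [hfun]
    exact Matrix.diagonal_one
  rw [hinv]
  refine Matrix.ext fun i j => ?_
  rw [Matrix.mul_diagonal, Matrix.diagonal_mul]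
  fin_cases i <;> fin_cases j <;>
    simp [Hmat, Matrix.vecHead, Matrix.vecTail, cons_val_five', div_eq_mul_inv, mul_comm,
      mul_assoc, mul_left_comm, hu1, hu2, hu3, hv1, hv2, hv3]

/-- The characteristic polynomial of H is (X² − 5)(X² − 1)²; in particular
det H = −5 and H is invertible. -/
theorem charpoly_Hmat (u1 u2 u3 v1 v2 v3 : ℝ) (hu1 : u1 ≠ 0) (hu2 : u2 ≠ 0)
    (hu3 : u3 ≠ 0) (hv1 : v1 ≠ 0) (hv2 : v2 ≠ 0) (hv3 : v3 ≠ 0) :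
    (Hmat u1 u2 u3 v1 v2 v3).charpoly = (X ^ 2 - C 5) * (X ^ 2 - C 1) ^ 2 ∧
    (Hmat u1 u2 u3 v1 v2 v3).det = -5 ∧
    IsUnit (Hmat u1 u2 u3 v1 v2 v3) := by
  have hdet : IsUnit (diagonal ![u1,u2,u3,v1,v2,v3]).det := by
    rw [Matrix.det_diagonal]
    simp [Fin.prod_univ_succ, Matrix.vecHead, Matrix.vecTail, isUnit_iff_ne_zero,
      hu1, hu2, hu3, hv1, hv2, hv3]
  have hcp : (Hmat u1 u2 u3 v1 v2 v3).charpoly = (X ^ 2 - C 5) * (X ^ 2 - C 1) ^ 2 := by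
    rw [Hmat_eq u1 u2 u3 v1 v2 v3 hu1 hu2 hu3 hv1 hv2 hv3, charpoly_conj' _ _ hdet,
      Amat_charpoly]
  have hd : (Hmat u1 u2 u3 v1 v2 v3).det = -5 := by
    have h0 := Matrix.det_eq_sign_charpoly_coeff (Hmat u1 u2 u3 v1 v2 v3)
    rw [hcp] at h0
    norm_num [coeff_zero_eq_eval_zero] at h0
    exact h0
  exact ⟨hcp, hd, (Matrix.isUnit_iff_isUnit_det _).2 (by rw [hd]; norm_num)⟩
end

section
/- Let u₁,u₂,u₃,v₁,v₂,v₃ be nonzero real numbers. Then det(Hᵀ·H) = 25, and 1 is an eigenvalue of the symmetric matrix Hᵀ·H with algebraic multiplicity at least 4; equivalently, (X − 1)⁴ divides the characteristic polynomial of Hᵀ·H, i.e. H has at least four singular values equal to 1 and the product of all six singular values of H is 5. -/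
open Matrix Polynomial

/-- Change of basis matrix: columns e₃, e₄, e₅, e₆, ŵ, a where
ŵ = (0, 1/u₂, 1/u₃, 1/v₁, 0, 1/v₃) and a = (u₁,u₂,u₃,v₁,v₂,v₃). -/
noncomputable def Pmat (u1 u2 u3 v1 v2 v3 : ℝ) : Matrix (Fin 6) (Fin 6) ℝ :=
  !![0,0,0,0,0,u1;
     0,0,0,0,1/u2,u2;
     1,0,0,0,1/u3,u3;
     0,1,0,0,1/v1,v1;
     0,0,1,0,0,v2;
     0,0,0,1,1/v3,v3]

/-- Inverse of `Pmat`. -/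
noncomputable def Qmat (u1 u2 u3 v1 v2 v3 : ℝ) : Matrix (Fin 6) (Fin 6) ℝ :=
  !![u2^2/(u1*u3)-u3/u1, -u2/u3, 1,0,0,0;
     u2^2/(u1*v1)-v1/u1, -u2/v1, 0,1,0,0;
     -v2/u1, 0,0,0,1,0;
     u2^2/(u1*v3)-v3/u1, -u2/v3,0,0,0,1;
     -u2^2/u1, u2,0,0,0,0;
     1/u1,0,0,0,0,0]

noncomputable def Bmat (u1 u2 u3 v1 v2 v3 : ℝ) : Matrix (Fin 2) (Fin 4) ℝ :=
  !![(u1^2+u2^2+u3^2+v1^2+v2^2+v3^2)/u3+u3,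
     (u1^2+u2^2+u3^2+v1^2+v2^2+v3^2)/v1+v1,
     v2,
     (u1^2+u2^2+u3^2+v1^2+v2^2+v3^2)/v3+v3;
     1/u3, 1/v1, 0, 1/v3]

noncomputable def Dmat (u1 u2 u3 v1 v2 v3 : ℝ) : Matrix (Fin 2) (Fin 2) ℝ :=
  !![5+(u1^2+u2^2+u3^2+v1^2+v2^2+v3^2)*(1/u2^2+1/u3^2+1/v1^2+1/v3^2),
     5*(u1^2+u2^2+u3^2+v1^2+v2^2+v3^2);
     1/u2^2+1/u3^2+1/v1^2+1/v3^2, 5]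

/-- The conjugated matrix P⁻¹ (HᵀH) P, block lower triangular with
top-left block the 4×4 identity. -/
noncomputable def Tmat (u1 u2 u3 v1 v2 v3 : ℝ) : Matrix (Fin 6) (Fin 6) ℝ :=
  reindex finSumFinEquiv finSumFinEquiv
    (fromBlocks 1 0 (Bmat u1 u2 u3 v1 v2 v3) (Dmat u1 u2 u3 v1 v2 v3))

lemma cons2_1 {α : Type*} (x : α) (u : Fin 1 → α) : vecCons x u (1 : Fin 2) = u 0 := rfl
lemma cons3_1 {α : Type*} (x : α) (u : Fin 2 → α) : vecCons x u (1 : Fin 3) = u 0 := rfl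
lemma cons3_2 {α : Type*} (x : α) (u : Fin 2 → α) : vecCons x u (2 : Fin 3) = u 1 := rfl
lemma cons4_1 {α : Type*} (x : α) (u : Fin 3 → α) : vecCons x u (1 : Fin 4) = u 0 := rfl
lemma cons4_2 {α : Type*} (x : α) (u : Fin 3 → α) : vecCons x u (2 : Fin 4) = u 1 := rfl
lemma cons4_3 {α : Type*} (x : α) (u : Fin 3 → α) : vecCons x u (3 : Fin 4) = u 2 := rfl
lemma cons5_1 {α : Type*} (x : α) (u : Fin 4 → α) : vecCons x u (1 : Fin 5) = u 0 := rfl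
lemma cons5_2 {α : Type*} (x : α) (u : Fin 4 → α) : vecCons x u (2 : Fin 5) = u 1 := rfl
lemma cons5_3 {α : Type*} (x : α) (u : Fin 4 → α) : vecCons x u (3 : Fin 5) = u 2 := rfl
lemma cons5_4 {α : Type*} (x : α) (u : Fin 4 → α) : vecCons x u (4 : Fin 5) = u 3 := rfl
lemma cons6_1 {α : Type*} (x : α) (u : Fin 5 → α) : vecCons x u (1 : Fin 6) = u 0 := rfl
lemma cons6_2 {α : Type*} (x : α) (u : Fin 5 → α) : vecCons x u (2 : Fin 6) = u 1 := rfl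
lemma cons6_3 {α : Type*} (x : α) (u : Fin 5 → α) : vecCons x u (3 : Fin 6) = u 2 := rfl
lemma cons6_4 {α : Type*} (x : α) (u : Fin 5 → α) : vecCons x u (4 : Fin 6) = u 3 := rfl
lemma cons6_5 {α : Type*} (x : α) (u : Fin 5 → α) : vecCons x u (5 : Fin 6) = u 4 := rfl

/-- Similar matrices have the same characteristic polynomial and determinant. -/
lemma charpoly_similar {n : Type*} [DecidableEq n] [Fintype n] (P Q M T : Matrix n n ℝ)
    (h1 : P * Q = 1) (h2 : M * P = P * T) :
    M.charpoly = T.charpoly ∧ M.det = T.det := by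
  have hM : M = P * T * Q := by
    calc M = M * (P * Q) := by rw [h1, mul_one]
    _ = (M * P) * Q := by rw [mul_assoc]
    _ = P * T * Q := by rw [h2]
  have hPQ : (P.map (C : ℝ → ℝ[X])) * (Q.map C) = 1 := by
    rw [← Matrix.map_mul (f := (C : ℝ →+* ℝ[X])), h1]; simp
  have hdet1 : (P.map (C : ℝ → ℝ[X])).det * (Q.map C).det = 1 := by
    rw [← det_mul, hPQ, det_one]
  have hscal : ∀ A : Matrix n n ℝ[X], Matrix.scalar n (X : ℝ[X]) * A = A * Matrix.scalar n X :=
    fun A => (Matrix.scalar_commute (X : ℝ[X]) (fun r => Commute.all _ _) A).eq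
  have e2 : P.map (C : ℝ → ℝ[X]) * Matrix.scalar n X * Q.map C = Matrix.scalar n X := by
    rw [← hscal, mul_assoc, hPQ, mul_one]
  have e1 : P.map (C : ℝ → ℝ[X]) * charmatrix T * Q.map C
      = P.map (C : ℝ → ℝ[X]) * Matrix.scalar n X * Q.map C
        - P.map (C : ℝ → ℝ[X]) * T.map C * Q.map C := by
    show P.map (C : ℝ → ℝ[X]) * (Matrix.scalar n X - (C : ℝ →+* ℝ[X]).mapMatrix T) * Q.map C = _
    simp only [RingHom.mapMatrix_apply]
    rw [mul_sub, sub_mul]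
  have key : charmatrix M = (P.map (C : ℝ → ℝ[X])) * charmatrix T * (Q.map C) := by
    show Matrix.scalar n (X : ℝ[X]) - (C : ℝ →+* ℝ[X]).mapMatrix M = _
    rw [e1, e2, hM]
    simp only [RingHom.mapMatrix_apply]
    rw [Matrix.map_mul (f := (C : ℝ →+* ℝ[X])), Matrix.map_mul (f := (C : ℝ →+* ℝ[X]))]
  constructor
  · unfold Matrix.charpoly
    rw [key, det_mul, det_mul]
    calc (P.map (C : ℝ → ℝ[X])).det * (charmatrix T).det * (Q.map C).det
        = (P.map (C : ℝ → ℝ[X])).det * (Q.map C).det * (charmatrix T).det := by ring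
    _ = (charmatrix T).det := by rw [hdet1, one_mul]
  · rw [hM, det_mul, det_mul]
    have hd : P.det * Q.det = 1 := by rw [← det_mul, h1, det_one]
    calc P.det * T.det * Q.det = P.det * Q.det * T.det := by ring
    _ = T.det := by rw [hd, one_mul]

lemma charpoly_one_fin4 : (1 : Matrix (Fin 4) (Fin 4) ℝ).charpoly = (X - C 1) ^ 4 := by
  rw [Matrix.charpoly_of_upperTriangular]
  · simp [Finset.prod_const]
  · intro i j hij
    exact Matrix.one_apply_ne (id hij : (j : Fin 4) < i).ne'


set_option maxHeartbeats 2000000 in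
lemma PQ_eq_one (u1 u2 u3 v1 v2 v3 : ℝ) (hu1 : u1 ≠ 0)
    (hu2 : u2 ≠ 0) (hu3 : u3 ≠ 0) (hv1 : v1 ≠ 0) (hv2 : v2 ≠ 0) (hv3 : v3 ≠ 0) :
    Pmat u1 u2 u3 v1 v2 v3 * Qmat u1 u2 u3 v1 v2 v3 = 1 := by
  ext i j
  fin_cases i <;> fin_cases j <;>
    · simp [Pmat, Qmat, Matrix.mul_apply, Fin.sum_univ_succ, Matrix.one_apply,
        cons2_1, cons3_1, cons3_2, cons4_1, cons4_2, cons4_3, cons5_1, cons5_2, cons5_3,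
        cons5_4, cons6_1, cons6_2, cons6_3, cons6_4, cons6_5]
      try field_simp
      try ring

lemma Tmat_explicit (u1 u2 u3 v1 v2 v3 : ℝ) :
    Tmat u1 u2 u3 v1 v2 v3 =
      !![1,0,0,0,0,0;
         0,1,0,0,0,0;
         0,0,1,0,0,0;
         0,0,0,1,0,0;
         (u1^2+u2^2+u3^2+v1^2+v2^2+v3^2)/u3+u3,
           (u1^2+u2^2+u3^2+v1^2+v2^2+v3^2)/v1+v1, v2,
           (u1^2+u2^2+u3^2+v1^2+v2^2+v3^2)/v3+v3,
           5+(u1^2+u2^2+u3^2+v1^2+v2^2+v3^2)*(1/u2^2+1/u3^2+1/v1^2+1/v3^2),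
           5*(u1^2+u2^2+u3^2+v1^2+v2^2+v3^2);
         1/u3, 1/v1, 0, 1/v3, 1/u2^2+1/u3^2+1/v1^2+1/v3^2, 5] := by
  ext i j
  fin_cases i <;> fin_cases j <;> rfl

set_option maxHeartbeats 100000000 in
lemma MP_eq_PT (u1 u2 u3 v1 v2 v3 : ℝ) (hu1 : u1 ≠ 0)
    (hu2 : u2 ≠ 0) (hu3 : u3 ≠ 0) (hv1 : v1 ≠ 0) (hv2 : v2 ≠ 0) (hv3 : v3 ≠ 0) :
    ((Hmat u1 u2 u3 v1 v2 v3)ᵀ * Hmat u1 u2 u3 v1 v2 v3) * Pmat u1 u2 u3 v1 v2 v3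
      = Pmat u1 u2 u3 v1 v2 v3 * Tmat u1 u2 u3 v1 v2 v3 := by
  rw [Tmat_explicit]
  ext i j
  fin_cases i <;> fin_cases j <;>
    · simp [Hmat, Pmat, Matrix.mul_apply, Matrix.transpose_apply, Fin.sum_univ_succ,
        cons2_1, cons3_1, cons3_2, cons4_1, cons4_2, cons4_3, cons5_1, cons5_2, cons5_3,
        cons5_4, cons6_1, cons6_2, cons6_3, cons6_4, cons6_5]
      try field_simp
      try ring

/-- det(HᵀH) = 25 and (X − 1)⁴ divides the characteristic polynomial of HᵀH,
i.e. 1 is an eigenvalue of HᵀH with algebraic multiplicity at least 4: H has at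
least four singular values equal to 1 and the product of all six singular
values is 5. -/
theorem singular_values_of_H (u1 u2 u3 v1 v2 v3 : ℝ) (hu1 : u1 ≠ 0)
    (hu2 : u2 ≠ 0) (hu3 : u3 ≠ 0) (hv1 : v1 ≠ 0) (hv2 : v2 ≠ 0) (hv3 : v3 ≠ 0) :
    ((Hmat u1 u2 u3 v1 v2 v3)ᵀ * Hmat u1 u2 u3 v1 v2 v3).det = 25 ∧
    (X - C 1) ^ 4 ∣ ((Hmat u1 u2 u3 v1 v2 v3)ᵀ * Hmat u1 u2 u3 v1 v2 v3).charpoly := by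
  obtain ⟨hcp, hdet⟩ := charpoly_similar _ _ _ _
    (PQ_eq_one u1 u2 u3 v1 v2 v3 hu1 hu2 hu3 hv1 hv2 hv3)
    (MP_eq_PT u1 u2 u3 v1 v2 v3 hu1 hu2 hu3 hv1 hv2 hv3)
  constructor
  · rw [hdet]
    unfold Tmat
    rw [Matrix.det_reindex_self, Matrix.det_fromBlocks_zero₁₂, det_one, one_mul, Dmat,
      Matrix.det_fin_two_of]
    ring
  · rw [hcp]
    unfold Tmat
    rw [Matrix.charpoly_reindex, Matrix.charpoly_fromBlocks_zero₁₂, charpoly_one_fin4]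
    exact Dvd.intro _ rfl
end

section
/- Let u₁,u₂,u₃,v₁,v₂,v₃ be nonzero real numbers. Then the largest singular value of H is strictly greater than 1 and the smallest singular value of H is strictly less than 1; equivalently, there exist unit vectors x, y ∈ ℝ⁶ with ‖H·x‖ > 1 and ‖H·y‖ < 1. -/
open Matrix

private lemma vec6_two {α : Type*} (a b c d e f : α) : (![a,b,c,d,e,f] : Fin 6 → α) 2 = c := rfl
private lemma vec6_three {α : Type*} (a b c d e f : α) : (![a,b,c,d,e,f] : Fin 6 → α) 3 = d := rfl
private lemma vec6_four {α : Type*} (a b c d e f : α) : (![a,b,c,d,e,f] : Fin 6 → α) 4 = e := rfl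
private lemma vec6_five {α : Type*} (a b c d e f : α) : (![a,b,c,d,e,f] : Fin 6 → α) 5 = f := rfl

private lemma aux (M : Matrix (Fin 6) (Fin 6) ℝ) (c a b1 b2 b3 : ℝ) (hc : c ≠ 0)
    (h0 : ∀ i, M i 0 = (![1,0,0,0,0,0] : Fin 6 → ℝ) i)
    (h1 : ∀ i, M i 1 = (![c,2,a,-b1,-b2,-b3] : Fin 6 → ℝ) i) :
    ∃ x y : EuclideanSpace ℝ (Fin 6), ‖x‖ = 1 ∧ ‖y‖ = 1 ∧
      1 < ‖((WithLp.equiv 2 (Fin 6 → ℝ)).symm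
            (M.mulVec (WithLp.equiv 2 (Fin 6 → ℝ) x)))‖ ∧
      ‖((WithLp.equiv 2 (Fin 6 → ℝ)).symm
            (M.mulVec (WithLp.equiv 2 (Fin 6 → ℝ) y)))‖ < 1 := by
  obtain ⟨C, hC⟩ : ∃ C : ℝ, C = c ^ 2 + 4 + a ^ 2 + b1 ^ 2 + b2 ^ 2 + b3 ^ 2 := ⟨_, rfl⟩
  have hC1 : 0 < C - 1 := by
    have := sq_nonneg c; have := sq_nonneg a; have := sq_nonneg b1
    have := sq_nonneg b2; have := sq_nonneg b3
    nlinarith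
  obtain ⟨ε, hε⟩ : ∃ ε : ℝ, ε = c / (C - 1) := ⟨_, rfl⟩
  have hεne : ε ≠ 0 := hε ▸ div_ne_zero hc hC1.ne'
  have hεC : ε * (C - 1) = c := by rw [hε]; field_simp
  have hde : (0:ℝ) < 1 + ε ^ 2 := by positivity
  obtain ⟨s, hs⟩ : ∃ s : ℝ, s = (Real.sqrt (1 + ε ^ 2))⁻¹ := ⟨_, rfl⟩
  have hs2 : s ^ 2 = (1 + ε ^ 2)⁻¹ := by rw [hs, inv_pow, Real.sq_sqrt hde.le]
  have hs2' : s ^ 2 * (1 + ε ^ 2) = 1 := by rw [hs2, inv_mul_cancel₀ hde.ne']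
  have hmx : M.mulVec ![0, 1, 0, 0, 0, 0] = ![c, 2, a, -b1, -b2, -b3] := by
    funext i
    simpa [Matrix.mulVec, dotProduct, Matrix.vecHead, Matrix.vecTail, Fin.sum_univ_six,
      vec6_two, vec6_three, vec6_four, vec6_five] using h1 i
  have hmy : M.mulVec ![s, -(s * ε), 0, 0, 0, 0] =
      ![s * (1 - ε * c), -(2 * (s * ε)), -(a * (s * ε)), b1 * (s * ε), b2 * (s * ε),
        b3 * (s * ε)] := by
    funext i
    fin_cases i <;>
      · simp [Matrix.mulVec, dotProduct, Matrix.vecHead, Matrix.vecTail, Fin.sum_univ_six, h0, h1,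
          vec6_two, vec6_three, vec6_four, vec6_five]
        try ring
  refine ⟨(WithLp.equiv 2 (Fin 6 → ℝ)).symm ![0, 1, 0, 0, 0, 0],
      (WithLp.equiv 2 (Fin 6 → ℝ)).symm ![s, -(s * ε), 0, 0, 0, 0], ?_, ?_, ?_, ?_⟩
  · rw [EuclideanSpace.norm_eq]
    simp [Fin.sum_univ_six, vec6_two, vec6_three, vec6_four, vec6_five]
  · rw [EuclideanSpace.norm_eq]
    simp only [WithLp.equiv_symm_apply, PiLp.toLp_apply, Fin.sum_univ_six, Matrix.cons_val_zero,
      Matrix.cons_val_one, Matrix.head_cons, vec6_two, vec6_three, vec6_four, vec6_five]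
    have h : ‖s‖ ^ 2 + ‖-(s * ε)‖ ^ 2 + ‖(0:ℝ)‖ ^ 2 + ‖(0:ℝ)‖ ^ 2 + ‖(0:ℝ)‖ ^ 2 + ‖(0:ℝ)‖ ^ 2
        = s ^ 2 * (1 + ε ^ 2) := by
      simp [Real.norm_eq_abs, abs_mul, mul_pow, sq_abs, abs_neg]; ring
    rw [h, hs2', Real.sqrt_one]
  · rw [Equiv.apply_symm_apply, hmx, EuclideanSpace.norm_eq]
    rw [Real.lt_sqrt (by norm_num)]
    simp only [WithLp.equiv_symm_apply, PiLp.toLp_apply, Fin.sum_univ_six, Matrix.cons_val_zero,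
      Matrix.cons_val_one, Matrix.head_cons, vec6_two, vec6_three, vec6_four, vec6_five,
      Real.norm_eq_abs, sq_abs]
    have hc2 : 0 < c ^ 2 := by positivity
    nlinarith [sq_nonneg a, sq_nonneg b1, sq_nonneg b2, sq_nonneg b3]
  · rw [Equiv.apply_symm_apply, hmy, EuclideanSpace.norm_eq]
    rw [Real.sqrt_lt' one_pos]
    simp only [WithLp.equiv_symm_apply, PiLp.toLp_apply, Fin.sum_univ_six, Matrix.cons_val_zero,
      Matrix.cons_val_one, Matrix.head_cons, vec6_two, vec6_three, vec6_four, vec6_five,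
      Real.norm_eq_abs, sq_abs]
    have hε2 : 0 < ε ^ 2 := by positivity
    have key : (1 - ε * c) ^ 2 + ε ^ 2 * (4 + a ^ 2 + b1 ^ 2 + b2 ^ 2 + b3 ^ 2)
        < 1 + ε ^ 2 := by
      have e1 : (1 - ε * c) ^ 2 + ε ^ 2 * (4 + a ^ 2 + b1 ^ 2 + b2 ^ 2 + b3 ^ 2)
          = 1 - 2 * ε * c + ε ^ 2 * C := by rw [hC]; ring
      have e2 : 2 * ε * c = 2 * (ε ^ 2 * (C - 1)) := by rw [← hεC]; ring
      have e3 : 0 < ε ^ 2 * (C - 1) := mul_pos hε2 hC1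
      rw [e1, e2]; nlinarith
    have hs2pos : 0 < s ^ 2 := by rw [hs2]; positivity
    calc (s * (1 - ε * c)) ^ 2 + (-(2 * (s * ε))) ^ 2 + (-(a * (s * ε))) ^ 2 +
          (b1 * (s * ε)) ^ 2 + (b2 * (s * ε)) ^ 2 + (b3 * (s * ε)) ^ 2
        = s ^ 2 * ((1 - ε * c) ^ 2 + ε ^ 2 * (4 + a ^ 2 + b1 ^ 2 + b2 ^ 2 + b3 ^ 2)) := by
          ring
      _ < s ^ 2 * (1 + ε ^ 2) := mul_lt_mul_of_pos_left key hs2pos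
      _ = 1 := hs2'
      _ = 1 ^ 2 := (one_pow 2).symm

/-- The largest singular value of H is > 1 and the smallest is < 1:
there exist Euclidean unit vectors x, y with ‖H·x‖ > 1 and ‖H·y‖ < 1. -/
theorem H_singular_values_straddle_one (u1 u2 u3 v1 v2 v3 : ℝ) (hu1 : u1 ≠ 0)
    (hu2 : u2 ≠ 0) (hu3 : u3 ≠ 0) (hv1 : v1 ≠ 0) (hv2 : v2 ≠ 0) (hv3 : v3 ≠ 0) :
    ∃ x y : EuclideanSpace ℝ (Fin 6), ‖x‖ = 1 ∧ ‖y‖ = 1 ∧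
      1 < ‖((WithLp.equiv 2 (Fin 6 → ℝ)).symm
            ((Hmat u1 u2 u3 v1 v2 v3).mulVec (WithLp.equiv 2 (Fin 6 → ℝ) x)))‖ ∧
      ‖((WithLp.equiv 2 (Fin 6 → ℝ)).symm
            ((Hmat u1 u2 u3 v1 v2 v3).mulVec (WithLp.equiv 2 (Fin 6 → ℝ) y)))‖ < 1 := by
  refine aux (Hmat u1 u2 u3 v1 v2 v3) (u1/u2) (u3/u2) (v1/u2) (v2/u2) (v3/u2)
    (div_ne_zero hu1 hu2) ?_ ?_ <;>
  · intro i
    fin_cases i <;>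
      · simp only [Hmat, neg_div]
        rfl
end

section
/- Let u₁,u₂,u₃,v₁,v₂,v₃ be nonzero real numbers and let ϖ₁,…,ϖ₅ be arbitrary real numbers. Define e ∈ ℝ⁶ by e = (u₁(ϖ₁+ϖ₂+ϖ₃−ϖ₄+ϖ₅), −u₂(ϖ₁−ϖ₂+ϖ₃+ϖ₄+ϖ₅), u₃(ϖ₁+ϖ₂+ϖ₃+ϖ₄+ϖ₅), v₁(ϖ₁−ϖ₂−ϖ₃−ϖ₄−ϖ₅), −v₂(ϖ₁+ϖ₂−ϖ₃−ϖ₄+ϖ₅), −v₃(ϖ₁+ϖ₂−ϖ₃−ϖ₄−ϖ₅)). Then H·e = (e₁, e₂, e₃, −e₄, −e₅, −e₆); in particular ‖H·e‖ = ‖e‖, so H acts as a Euclidean isometry on the 5-dimensional subspace spanned by such vectors e. -/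
open Matrix

section aux
variable {α : Type*} (a b c d f g : α)
lemma six_val0 : (![a,b,c,d,f,g]) 0 = a := rfl
lemma six_val1 : (![a,b,c,d,f,g]) 1 = b := rfl
lemma six_val2 : (![a,b,c,d,f,g]) 2 = c := rfl
lemma six_val3 : (![a,b,c,d,f,g]) 3 = d := rfl
lemma six_val4 : (![a,b,c,d,f,g]) 4 = f := rfl
lemma six_val5 : (![a,b,c,d,f,g]) 5 = g := rfl
end aux

/-- For the linear combination e of the columns of N, H·e only flips the signs of
the last three components of e; in particular ‖H·e‖ = ‖e‖, so H acts as a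
Euclidean isometry on the 5-dimensional subspace spanned by such vectors. -/
theorem H_isometry_on_N (u1 u2 u3 v1 v2 v3 : ℝ) (hu1 : u1 ≠ 0) (hu2 : u2 ≠ 0)
    (hu3 : u3 ≠ 0) (hv1 : v1 ≠ 0) (hv2 : v2 ≠ 0) (hv3 : v3 ≠ 0)
    (w1 w2 w3 w4 w5 : ℝ) :
    letI e : Fin 6 → ℝ :=
      ![u1 * (w1 + w2 + w3 - w4 + w5),
        -u2 * (w1 - w2 + w3 + w4 + w5),
        u3 * (w1 + w2 + w3 + w4 + w5),
        v1 * (w1 - w2 - w3 - w4 - w5),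
        -v2 * (w1 + w2 - w3 - w4 + w5),
        -v3 * (w1 + w2 - w3 - w4 - w5)]
    (Hmat u1 u2 u3 v1 v2 v3).mulVec e =
      ![e 0, e 1, e 2, -e 3, -e 4, -e 5] ∧
    ‖((WithLp.equiv 2 (Fin 6 → ℝ)).symm ((Hmat u1 u2 u3 v1 v2 v3).mulVec e))‖ =
      ‖((WithLp.equiv 2 (Fin 6 → ℝ)).symm e)‖ := by
  have h1 : (Hmat u1 u2 u3 v1 v2 v3).mulVec
      ![u1 * (w1 + w2 + w3 - w4 + w5),
        -u2 * (w1 - w2 + w3 + w4 + w5),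
        u3 * (w1 + w2 + w3 + w4 + w5),
        v1 * (w1 - w2 - w3 - w4 - w5),
        -v2 * (w1 + w2 - w3 - w4 + w5),
        -v3 * (w1 + w2 - w3 - w4 - w5)] =
      ![u1 * (w1 + w2 + w3 - w4 + w5),
        -u2 * (w1 - w2 + w3 + w4 + w5),
        u3 * (w1 + w2 + w3 + w4 + w5),
        -(v1 * (w1 - w2 - w3 - w4 - w5)),
        -(-v2 * (w1 + w2 - w3 - w4 + w5)),
        -(-v3 * (w1 + w2 - w3 - w4 - w5))] := by
    simp only [Hmat, Matrix.cons_mulVec, Matrix.cons_dotProduct, Matrix.dotProduct_of_isEmpty,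
      Matrix.empty_mulVec, Matrix.head_cons, Matrix.tail_cons]
    refine congrArg₂ _ ?_ (congrArg₂ _ ?_ (congrArg₂ _ ?_ (congrArg₂ _ ?_
      (congrArg₂ _ ?_ (congrArg₂ _ ?_ rfl))))) <;> (field_simp; ring)
  refine ⟨h1, ?_⟩
  rw [h1, EuclideanSpace.norm_eq, EuclideanSpace.norm_eq]
  congr 1
  simp only [Fin.sum_univ_six, WithLp.equiv_symm_apply, PiLp.toLp_apply, six_val0, six_val1, six_val2,
    six_val3, six_val4, six_val5, norm_neg]
end

section
/- Let u₁,u₂,u₃,v₁,v₂,v₃ be nonzero real numbers and γ₁, γ₂ real numbers. Let E be the 6×6 real matrix whose first five columns are the columns of the matrix N with rows (u₁, u₁, u₁, −u₁, u₁), (−u₂, u₂, −u₂, −u₂, −u₂), (u₃, u₃, u₃, u₃, u₃), (v₁, −v₁, −v₁, −v₁, −v₁), (−v₂, −v₂, v₂, v₂, −v₂), (−v₃, −v₃, v₃, v₃, v₃), and whose sixth column is (γ₁u₁/u₃, γ₁u₂/u₃, γ₁, γ₂v₁/v₃, γ₂v₂/v₃, γ₂). Then det(E) = −32(γ₂u₃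 + γ₁v₃)·u₁u₂v₁v₂. In particular det(E) = 0 if and only if γ₂u₃ + γ₁v₃ = 0, in which case the sixth column is a scalar multiple θ·(u₁, u₂, u₃, −v₁, −v₂, −v₃). -/
open Matrix

/-- The 6×6 matrix E: the matrix N augmented on the right by the column
(γ₁u₁/u₃, γ₁u₂/u₃, γ₁, γ₂v₁/v₃, γ₂v₂/v₃, γ₂). -/
noncomputable def Emat (u1 u2 u3 v1 v2 v3 γ1 γ2 : ℝ) : Matrix (Fin 6) (Fin 6) ℝ :=
  !![u1, u1, u1, -u1, u1, γ1*u1/u3;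
     -u2, u2, -u2, -u2, -u2, γ1*u2/u3;
     u3, u3, u3, u3, u3, γ1;
     v1, -v1, -v1, -v1, -v1, γ2*v1/v3;
     -v2, -v2, v2, v2, -v2, γ2*v2/v3;
     -v3, -v3, v3, v3, v3, γ2]

set_option maxRecDepth 20000 in
set_option maxHeartbeats 8000000 in
/-- Auxiliary: determinant with the divisions abstracted away. -/
lemma detM_aux (u1 u2 u3 v1 v2 v3 a b : ℝ) :
    (!![u1, u1, u1, -u1, u1, a*u1;
       -u2, u2, -u2, -u2, -u2, a*u2;
       u3, u3, u3, u3, u3, a*u3;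
       v1, -v1, -v1, -v1, -v1, b*v1;
       -v2, -v2, v2, v2, -v2, b*v2;
       -v3, -v3, v3, v3, v3, b*v3] : Matrix (Fin 6) (Fin 6) ℝ).det
      = -32 * (a + b) * (u1*u2*u3*v1*v2*v3) := by
  simp only [Matrix.det_succ_row_zero, Fin.sum_univ_succ, Fin.sum_univ_zero,
    Matrix.submatrix_apply, Matrix.cons_val', Matrix.cons_val_zero, Matrix.cons_val_one,
    Matrix.head_cons, Matrix.head_fin_const, Matrix.cons_val_succ, Matrix.det_fin_one,
    Matrix.of_apply, Matrix.empty_val', Matrix.cons_val_fin_one, Fin.succAbove,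
    Fin.val_zero, Fin.val_succ, Fin.val_eq_zero, Matrix.det_fin_one_of]
  norm_num [Fin.lt_def, Fin.succ, Fin.castSucc, Fin.castAdd, Fin.castLE]
  ring

lemma cons_val_five'_s19 {α : Type*} (a0 a1 a2 a3 a4 a5 : α) :
    (![a0,a1,a2,a3,a4,a5] : Fin 6 → α) 5 = a5 := rfl

set_option maxRecDepth 20000 in
set_option maxHeartbeats 2000000 in
/-- det(E) = −32(γ₂u₃ + γ₁v₃)u₁u₂v₁v₂; in particular det(E) = 0 iff
γ₂u₃ + γ₁v₃ = 0, in which case the sixth column is a scalar multiple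
θ·(u₁, u₂, u₃, −v₁, −v₂, −v₃). -/
theorem Emat_det (u1 u2 u3 v1 v2 v3 γ1 γ2 : ℝ) (hu1 : u1 ≠ 0) (hu2 : u2 ≠ 0)
    (hu3 : u3 ≠ 0) (hv1 : v1 ≠ 0) (hv2 : v2 ≠ 0) (hv3 : v3 ≠ 0) :
    (Emat u1 u2 u3 v1 v2 v3 γ1 γ2).det = -32 * (γ2*u3 + γ1*v3) * (u1*u2*v1*v2) ∧
    ((Emat u1 u2 u3 v1 v2 v3 γ1 γ2).det = 0 ↔ γ2*u3 + γ1*v3 = 0) ∧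
    (γ2*u3 + γ1*v3 = 0 → ∃ θ : ℝ,
      (![γ1*u1/u3, γ1*u2/u3, γ1, γ2*v1/v3, γ2*v2/v3, γ2] : Fin 6 → ℝ) =
        θ • ![u1, u2, u3, -v1, -v2, -v3]) := by
  have hE : Emat u1 u2 u3 v1 v2 v3 γ1 γ2 =
      !![u1, u1, u1, -u1, u1, (γ1/u3)*u1;
         -u2, u2, -u2, -u2, -u2, (γ1/u3)*u2;
         u3, u3, u3, u3, u3, (γ1/u3)*u3;
         v1, -v1, -v1, -v1, -v1, (γ2/v3)*v1;
         -v2, -v2, v2, v2, -v2, (γ2/v3)*v2;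
         -v3, -v3, v3, v3, v3, (γ2/v3)*v3] := by
    unfold Emat
    congr 1 <;> funext i j <;> fin_cases i <;> fin_cases j <;>
      simp [cons_val_five'_s19] <;> field_simp <;> ring
  have hdet : (Emat u1 u2 u3 v1 v2 v3 γ1 γ2).det
      = -32 * (γ2*u3 + γ1*v3) * (u1*u2*v1*v2) := by
    rw [hE, detM_aux]
    field_simp
    ring
  refine ⟨hdet, ?_, ?_⟩
  · rw [hdet]
    constructor
    · intro h
      have hp : u1*u2*v1*v2 ≠ 0 := by
        simp [mul_ne_zero, hu1, hu2, hv1, hv2]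
      rcases mul_eq_zero.1 h with h' | h'
      · rcases mul_eq_zero.1 h' with h'' | h''
        · norm_num at h''
        · exact h''
      · exact absurd h' hp
    · intro h; rw [h]; ring
  · intro h
    refine ⟨γ1/u3, ?_⟩
    have hγ2 : γ2 = -γ1 * v3 / u3 := by
      field_simp; linarith
    funext i
    fin_cases i <;>
      simp [hγ2, cons_val_five'_s19, smul_eq_mul] <;> field_simp <;> ring
end
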